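/- The reduction from Dominating Set is correct: a graph G = (V,E) with |V| = n has a dominating set of size at most κ if and only if the associated temporal election instance (n agents, n projects, κ timesteps, with agent i approving at every timestep the projects corresponding to vertex v_i and its neighbors) admits an outcome giving every agent utility at least 1. -/
import Mathlib


/-- The utility of agent `i` under outcome `o`. -/
noncomputable def util {P : Type*} {n ℓ : ℕ}
    (S : Fin n → Fin ℓ → Finset P) (i : Fin n) (o : Fin ℓ → P) : ℕ :=
  Nat.card {t : Fin ℓ // o t ∈ S i t}

/-- Correctness of the Dominating Set reduction: a graph `G` on `n` vertices has
a dominating set of size at most `κ` iff the temporal election instance with `n`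
agents, `n` projects, `κ` timesteps, where agent `i` approves at every timestep
the projects corresponding to vertex `v_i` and its neighbors, admits an outcome
giving every agent utility at least 1. -/
theorem dominatingSet_reduction (n κ : ℕ) (hn : 1 ≤ n) (hκ : 1 ≤ κ)
    (G : SimpleGraph (Fin n)) [DecidableRel G.Adj]
    (S : Fin n → Fin κ → Finset (Fin n))
    (hS : ∀ (i : Fin n) (t : Fin κ),
      S i t = Finset.univ.filter (fun j => i = j ∨ G.Adj i j)) :
    (∃ D : Finset (Fin n), D.card ≤ κ ∧
        ∀ v : Fin n, v ∈ D ∨ ∃ u ∈ D, G.Adj v u) ↔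
      (∃ o : Fin κ → Fin n, ∀ i : Fin n, 1 ≤ util S i o) := by
  constructor
  · rintro ⟨D, hcard, hdom⟩
    -- D is nonempty
    have hne : D.Nonempty := by
      rcases hdom ⟨0, hn⟩ with h | ⟨u, hu, _⟩
      · exact ⟨_, h⟩
      · exact ⟨u, hu⟩
    obtain ⟨d₀, hd₀⟩ := hne
    set e := D.orderIsoOfFin rfl with he
    refine ⟨fun t => if h : t.val < D.card then (e ⟨t.val, h⟩ : Fin n) else d₀, ?_⟩
    intro i
    -- find a dominator u ∈ D of i
    have : ∃ u ∈ D, i = u ∨ G.Adj i u := by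
      rcases hdom i with h | ⟨u, hu, hadj⟩
      · exact ⟨i, h, Or.inl rfl⟩
      · exact ⟨u, hu, Or.inr hadj⟩
    obtain ⟨u, hu, hui⟩ := this
    obtain ⟨k, hk⟩ := e.surjective ⟨u, hu⟩
    have hkκ : k.val < κ := lt_of_lt_of_le k.isLt hcard
    have hmem : (if h : (⟨k.val, hkκ⟩ : Fin κ).val < D.card then (e ⟨k.val, h⟩ : Fin n) else d₀)
        ∈ S i ⟨k.val, hkκ⟩ := by
      rw [hS]
      simp only [dif_pos k.isLt, Fin.eta, hk, Finset.mem_filter, Finset.mem_univ, true_and]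
      exact hui
    have : Nonempty {t : Fin κ // (fun t => if h : t.val < D.card then (e ⟨t.val, h⟩ : Fin n) else d₀) t ∈ S i t} :=
      ⟨⟨⟨k.val, hkκ⟩, hmem⟩⟩
    exact Nat.one_le_iff_ne_zero.mpr (Nat.card_ne_zero.mpr ⟨this, Subtype.finite⟩)
  · rintro ⟨o, ho⟩
    refine ⟨Finset.image o Finset.univ, ?_, ?_⟩
    · exact (Finset.card_image_le.trans (by simp))
    · intro v
      have h1 := ho v
      have hne : Nonempty {t : Fin κ // o t ∈ S v t} := by
        have : 0 < Nat.card {t : Fin κ // o t ∈ S v t} := h1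
        exact (Nat.card_pos_iff.mp this).1
      obtain ⟨t, ht⟩ := hne
      rw [hS] at ht
      simp only [Finset.mem_filter, Finset.mem_univ, true_and] at ht
      rcases ht with h | h
      · exact Or.inl (by simp only [Finset.mem_image, Finset.mem_univ, true_and]; exact ⟨t, h.symm⟩)
      · exact Or.inr ⟨o t, by simp, h⟩
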